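/- Verification by infinity-norm minimization: Let Q be a basis matrix of Ker(Φ), I = supp(Ψᵀx̄), J = Iᶜ, u₁ = −QᵀΨ_I sign(Ψᵀ_I x̄), A = QᵀΨ_J. Then part (2) of Condition 1 holds (∃ y with Ψy ∈ Im(Φᵀ), y_I = sign(Ψᵀ_I x̄), ‖y_J‖_∞ < 1) if and only if the convex program min{‖u‖_∞ : Au = u₁, u ∈ ℝ^{|J|}} has optimal value strictly less than 1. -/

import Mathlib

open Matrix

/-- ℓ₁ norm of a finite real vector. -/
noncomputable def l1 {k : ℕ} (v : Fin k → ℝ) : ℝ := ∑ i, |v i|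

/-- ℓ₂ (Euclidean) norm of a finite real vector. -/
noncomputable def l2 {k : ℕ} (v : Fin k → ℝ) : ℝ := Real.sqrt (∑ i, (v i) ^ 2)

/-- ℓ₁ norm of the subvector indexed by `S`. -/
noncomputable def l1S {k : ℕ} (S : Finset (Fin k)) (v : Fin k → ℝ) : ℝ := ∑ i ∈ S, |v i|

/-- ℓ₂ norm of the subvector indexed by `S`. -/
noncomputable def l2S {k : ℕ} (S : Finset (Fin k)) (v : Fin k → ℝ) : ℝ :=
  Real.sqrt (∑ i ∈ S, (v i) ^ 2)

/-- ℓ∞ norm of the subvector indexed by `S` (0 if `S` is empty). -/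
noncomputable def linfS {k : ℕ} (S : Finset (Fin k)) (v : Fin k → ℝ) : ℝ := ⨆ i ∈ S, |v i|

/-- A vector orthogonal to the kernel of `Φ` lies in the row space of `Φ`. -/
lemma mem_range_transpose_aux {m n : ℕ} (Φ : Matrix (Fin m) (Fin n) ℝ) (v : Fin n → ℝ)
    (h : ∀ x, Φ.mulVec x = 0 → v ⬝ᵥ x = 0) : ∃ β, Φ.transpose.mulVec β = v := by
  let E := EuclideanSpace ℝ (Fin n)
  let e : (Fin n → ℝ) ≃ₗ[ℝ] E := (WithLp.linearEquiv 2 ℝ (Fin n → ℝ)).symm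
  let K : Submodule ℝ E := (LinearMap.range Φ.transpose.mulVecLin).map e.toLinearMap
  obtain ⟨p, hp, w, hw, hvw⟩ := K.exists_add_mem_mem_orthogonal (e v)
  have hΦw : Φ.mulVec (e.symm w) = 0 := by
    funext j
    have := hw (e (Φ.transpose.mulVec (Pi.single j 1)))
      ⟨Φ.transpose.mulVec (Pi.single j 1), ⟨Pi.single j 1, rfl⟩, rfl⟩
    have hinner : (Φ.transpose.mulVec (Pi.single j 1)) ⬝ᵥ (e.symm w) = 0 := by
      have hi : ∀ a, inner (𝕜 := ℝ) (e a) w = a ⬝ᵥ e.symm w := fun a => by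
        change ∑ i, _ = _; exact Finset.sum_congr rfl (fun i _ => mul_comm _ _)
      exact (hi _).symm.trans this
    rw [mulVec_transpose, ← dotProduct_mulVec] at hinner
    simpa [dotProduct, Pi.single_apply] using hinner
  have hvw0 : v ⬝ᵥ (e.symm w) = 0 := h _ hΦw
  have hwK : w = 0 := by
    have h1 : inner (𝕜 := ℝ) (e v) w = 0 := by
      have hi : ∀ a, inner (𝕜 := ℝ) (e a) w = a ⬝ᵥ e.symm w := fun a => by
        change ∑ i, _ = _; exact Finset.sum_congr rfl (fun i _ => mul_comm _ _)
      exact (hi v).trans hvw0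
    have h2 : inner (𝕜 := ℝ) p w = 0 := hw p hp
    have : inner (𝕜 := ℝ) w w = 0 := by
      have := congrArg (fun z => inner (𝕜 := ℝ) z w) hvw
      simpa [inner_add_left, h2] using this.symm.trans h1
    exact inner_self_eq_zero.mp this
  obtain ⟨q, ⟨β, hβ⟩, hq⟩ := hp
  refine ⟨β, ?_⟩
  have hvq : v = q := e.injective (by rw [hvw, hwK, add_zero]; exact hq.symm)
  rw [hvq, ← hβ]; rfl

/-- `Ψz ∈ Im Φᵀ` iff `QᵀΨz = 0`, where `Q` spans `Ker Φ`. -/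
lemma range_iff_QtPsi {m n l k : ℕ} (Φ : Matrix (Fin m) (Fin n) ℝ)
    (Ψ : Matrix (Fin n) (Fin l) ℝ) (Q : Matrix (Fin n) (Fin k) ℝ)
    (hQker : ∀ x : Fin n → ℝ, Φ.mulVec x = 0 ↔ ∃ c : Fin k → ℝ, x = Q.mulVec c)
    (z : Fin l → ℝ) :
    (∃ β : Fin m → ℝ, Ψ.mulVec z = Φ.transpose.mulVec β) ↔
      (Q.transpose * Ψ).mulVec z = 0 := by
  have hΦQ : Φ * Q = 0 := by
    ext i j
    have hcol : Φ.mulVec (fun r => Q r j) = 0 :=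
      (hQker _).mpr ⟨Pi.single j 1, by
        funext r; simp [Matrix.mulVec, dotProduct, Pi.single_apply]⟩
    have := congrFun hcol i
    simpa [Matrix.mul_apply, Matrix.mulVec, dotProduct] using this
  constructor
  · rintro ⟨β, hβ⟩
    rw [← Matrix.mulVec_mulVec, hβ, Matrix.mulVec_mulVec, ← Matrix.transpose_mul, hΦQ]
    simp
  · intro h0
    have key : ∀ x, Φ.mulVec x = 0 → (Ψ.mulVec z) ⬝ᵥ x = 0 := by
      intro x hx
      obtain ⟨c, rfl⟩ := (hQker x).mp hx
      have : (Ψ.mulVec z) ⬝ᵥ Q.mulVec c = (Q.transpose.mulVec (Ψ.mulVec z)) ⬝ᵥ c := by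
        rw [dotProduct_mulVec, mulVec_transpose]
      rw [this, Matrix.mulVec_mulVec, h0]
      simp
    obtain ⟨β, hβ⟩ := mem_range_transpose_aux Φ _ key
    exact ⟨β, hβ.symm⟩

/-- verification of part (2) of Condition 1 via ∞-norm minimization. -/
theorem stmt16 {m n l k : ℕ} (Φ : Matrix (Fin m) (Fin n) ℝ) (Ψ : Matrix (Fin n) (Fin l) ℝ)
    (hΦ : Φ.rank = m)
    (Q : Matrix (Fin n) (Fin k) ℝ)
    (hQker : ∀ x : Fin n → ℝ, Φ.mulVec x = 0 ↔ ∃ c : Fin k → ℝ, x = Q.mulVec c)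
    (hQinj : Function.Injective Q.mulVec)
    (xb : Fin n → ℝ) (I : Finset (Fin l))
    (hI : I = Finset.univ.filter fun i => Ψ.transpose.mulVec xb i ≠ 0)
    (s : Fin l → ℝ)
    (hs : s = fun i => if i ∈ I then Real.sign (Ψ.transpose.mulVec xb i) else 0) :
    ((∃ y : Fin l → ℝ, (∃ β : Fin m → ℝ, Ψ.mulVec y = Φ.transpose.mulVec β) ∧
        (∀ i ∈ I, y i = Real.sign (Ψ.transpose.mulVec xb i)) ∧ ∀ i ∉ I, |y i| < 1)
      ↔ ∃ u : Fin l → ℝ, (∀ i ∈ I, u i = 0) ∧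
          (Q.transpose * Ψ).mulVec u = -((Q.transpose * Ψ).mulVec s) ∧
          ∀ i ∉ I, |u i| < 1) := by
  constructor
  · rintro ⟨y, hmem, hyI, hyJ⟩
    refine ⟨y - s, ?_, ?_, ?_⟩
    · intro i hi
      simp [hs, hi, hyI i hi]
    · have h0 : (Q.transpose * Ψ).mulVec y = 0 :=
        (range_iff_QtPsi Φ Ψ Q hQker y).mp hmem
      rw [Matrix.mulVec_sub, h0, zero_sub]
    · intro i hi
      have : s i = 0 := by simp [hs, hi]
      simpa [this] using hyJ i hi
  · rintro ⟨u, huI, huEq, huJ⟩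
    refine ⟨u + s, ?_, ?_, ?_⟩
    · apply (range_iff_QtPsi Φ Ψ Q hQker _).mpr
      rw [Matrix.mulVec_add, huEq]
      simp
    · intro i hi
      simp [hs, hi, huI i hi]
    · intro i hi
      have : s i = 0 := by simp [hs, hi]
      simpa [this] using huJ i hi
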